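/- Let 0 < m ≤ L, 0 ≤ β < 1, 0 < α < 2(1+β)/L, and set γ_m = mα − 1 − β and γ_L = Lα − 1 − β. Define R(α, β) = sup over λ ∈ [m, L] of the maximum modulus of the roots of z² + (αλ − 1 − β)z + β. Then: R = √β when γ_L² < 4β and γ_m² < 4β; R = max(√β, (γ_L + √(γ_L² − 4β))/2) when γ_L² ≥ 4β and γ_m² < 4β; R = max(√β, (−γ_m + √(γ_m² − 4β))/2) when γ_L² < 4β and γ_m² ≥ 4β; and R = max(√β, (γ_L + √(γ_L² − 4β))/2, (−γ_m + √(γ_m² − 4β))/2) when γ_L² ≥ 4β and γ_m² ≥ 4β. -/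

import Mathlib

open Real Complex

lemma quad_root_cases (b c : ℝ) (z : ℂ)
    (hz : z ^ 2 + (c : ℂ) * z + (b : ℂ) = 0) :
    ‖z‖ = Real.sqrt b ∨
      (4 * b ≤ c ^ 2 ∧ ‖z‖ ≤ (|c| + Real.sqrt (c ^ 2 - 4 * b)) / 2) := by
  by_cases him : z.im = 0
  · right
    set x := z.re with hx
    have hzx : z = (x : ℂ) := by
      apply Complex.ext <;> simp [him, hx]
    rw [hzx] at hz
    have hre : x ^ 2 + c * x + b = 0 := by
      have h2 : ((x ^ 2 + c * x + b : ℝ) : ℂ) = 0 := by push_cast; linear_combination hz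
      exact_mod_cast h2
    have hd : 4 * b ≤ c ^ 2 := by nlinarith [sq_nonneg (2 * x + c)]
    have hs : Real.sqrt (c ^ 2 - 4 * b) = |2 * x + c| := by
      rw [show c ^ 2 - 4 * b = (2 * x + c) ^ 2 by nlinarith]
      exact Real.sqrt_sq_eq_abs _
    have habs : ‖z‖ = |x| := by rw [hzx]; exact (Complex.norm_real x).trans (Real.norm_eq_abs x)
    have key : 2 * |x| ≤ |c| + |2 * x + c| := by
      rcases abs_cases x with ⟨e1, _⟩ | ⟨e1, _⟩ <;> rcases abs_cases c with ⟨e2, _⟩ | ⟨e2, _⟩ <;>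
        rcases abs_cases (2 * x + c) with ⟨e3, _⟩ | ⟨e3, _⟩ <;> linarith
    refine ⟨hd, ?_⟩
    rw [habs, hs]; linarith
  · left
    have hconj : (starRingEnd ℂ) z ^ 2 + (c : ℂ) * (starRingEnd ℂ) z + (b : ℂ) = 0 := by
      have h := congrArg (starRingEnd ℂ) hz
      simpa using h
    have hfac : ((starRingEnd ℂ) z - z) * ((starRingEnd ℂ) z + z + c) = 0 := by
      linear_combination hconj - hz
    have hne : (starRingEnd ℂ) z - z ≠ 0 := by
      intro h
      apply him
      have h2 := congrArg Complex.im h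
      simp [Complex.sub_im, Complex.conj_im] at h2
      linarith
    have hsum : (starRingEnd ℂ) z = -z - c := by
      have h3 := (mul_eq_zero.mp hfac).resolve_left hne
      linear_combination h3
    have hnormSq : ((Complex.normSq z : ℝ) : ℂ) = (b : ℂ) := by
      rw [← Complex.mul_conj, hsum]
      linear_combination -hz
    have hb' : Complex.normSq z = b := by exact_mod_cast hnormSq
    rw [Complex.norm_def, hb']

lemma quad_root_exists_complex (b c : ℝ) (hb : c ^ 2 ≤ 4 * b) :
    ∃ z : ℂ, z ^ 2 + (c : ℂ) * z + (b : ℂ) = 0 ∧ ‖z‖ = Real.sqrt b := by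
  set s := Real.sqrt (4 * b - c ^ 2) with hsdef
  have hs : s ^ 2 = 4 * b - c ^ 2 := Real.sq_sqrt (by linarith)
  refine ⟨(-(c : ℂ) + (s : ℂ) * Complex.I) / 2, ?_, ?_⟩
  · have hI : Complex.I ^ 2 = -1 := Complex.I_sq
    have hs' : ((s : ℂ)) ^ 2 = 4 * (b : ℂ) - (c : ℂ) ^ 2 := by
      have := congrArg (fun t : ℝ => (t : ℂ)) hs
      push_cast at this
      exact this
    linear_combination ((s : ℂ) ^ 2 / 4) * hI - (1 / 4) * hs'
  · have h1 : (-(c : ℂ) + (s : ℂ) * Complex.I) / 2 = Complex.mk (-c / 2) (s / 2) := by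
      apply Complex.ext <;> simp
    rw [h1, Complex.norm_def, Complex.normSq_mk]
    rw [show -c / 2 * (-c / 2) + s / 2 * (s / 2) = b by nlinarith]

lemma quad_root_exists_real (b c : ℝ) (hb : 4 * b ≤ c ^ 2) :
    ∃ z : ℂ, z ^ 2 + (c : ℂ) * z + (b : ℂ) = 0 ∧
      ‖z‖ = (|c| + Real.sqrt (c ^ 2 - 4 * b)) / 2 := by
  set d := Real.sqrt (c ^ 2 - 4 * b) with hddef
  have hd : d ^ 2 = c ^ 2 - 4 * b := Real.sq_sqrt (by linarith)
  have hd0 : 0 ≤ d := Real.sqrt_nonneg _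
  rcases le_or_gt 0 c with hc | hc
  · refine ⟨((-(c + d) / 2 : ℝ) : ℂ), ?_, ?_⟩
    · have hx : (-(c + d) / 2) ^ 2 + c * (-(c + d) / 2) + b = 0 := by nlinarith
      have h2 : (((-(c + d) / 2) ^ 2 + c * (-(c + d) / 2) + b : ℝ) : ℂ) = 0 := by
        rw [hx]; simp
      push_cast at h2 ⊢
      linear_combination h2
    · rw [Complex.norm_real, Real.norm_eq_abs, _root_.abs_of_nonpos (by linarith : -(c + d) / 2 ≤ 0),
        _root_.abs_of_nonneg hc]
      ring
  · refine ⟨(((-c + d) / 2 : ℝ) : ℂ), ?_, ?_⟩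
    · have hx : ((-c + d) / 2) ^ 2 + c * ((-c + d) / 2) + b = 0 := by nlinarith
      have h2 : ((((-c + d) / 2) ^ 2 + c * ((-c + d) / 2) + b : ℝ) : ℂ) = 0 := by
        rw [hx]; simp
      push_cast at h2 ⊢
      linear_combination h2
    · rw [Complex.norm_real, Real.norm_eq_abs, _root_.abs_of_nonneg (by linarith : (0:ℝ) ≤ (-c + d) / 2),
        _root_.abs_of_nonpos hc.le]

set_option maxHeartbeats 1600000 in
/-- Closed form (eq. (26) of the paper) for
`R(α, β) = sup_{λ ∈ [m,L]} max{|z| : z² + (αλ − 1 − β)z + β = 0}`, the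
worst-case spectral radius of the heavy ball iteration matrix. -/
theorem heavy_ball_spectral_radius_closed_form
    (m L α β : ℝ) (hm : 0 < m) (hmL : m ≤ L)
    (hβ0 : 0 ≤ β) (hβ1 : β < 1) (hα0 : 0 < α) (hα1 : α < 2 * (1 + β) / L)
    (γm γL : ℝ) (hγm : γm = m * α - 1 - β) (hγL : γL = L * α - 1 - β)
    (R : ℝ)
    (hR : R = sSup {x : ℝ | ∃ lam ∈ Set.Icc m L, ∃ z : ℂ,
      z ^ 2 + ((α * lam - 1 - β : ℝ) : ℂ) * z + (β : ℂ) = 0 ∧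
      x = ‖z‖}) :
    (γL ^ 2 < 4 * β → γm ^ 2 < 4 * β → R = Real.sqrt β) ∧
    (4 * β ≤ γL ^ 2 → γm ^ 2 < 4 * β →
      R = max (Real.sqrt β) ((γL + Real.sqrt (γL ^ 2 - 4 * β)) / 2)) ∧
    (γL ^ 2 < 4 * β → 4 * β ≤ γm ^ 2 →
      R = max (Real.sqrt β) ((-γm + Real.sqrt (γm ^ 2 - 4 * β)) / 2)) ∧
    (4 * β ≤ γL ^ 2 → 4 * β ≤ γm ^ 2 →
      R = max (Real.sqrt β)
        (max ((γL + Real.sqrt (γL ^ 2 - 4 * β)) / 2)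
          ((-γm + Real.sqrt (γm ^ 2 - 4 * β)) / 2))) := by
  have hsqβ : Real.sqrt β ^ 2 = β := Real.sq_sqrt hβ0
  have hsβ0 : 0 ≤ Real.sqrt β := Real.sqrt_nonneg β
  have hγmL : γm ≤ γL := by
    rw [hγm, hγL]
    nlinarith [mul_nonneg hα0.le (sub_nonneg.2 hmL)]
  have hmm : α * m - 1 - β = γm := by rw [hγm]; ring
  have hLL : α * L - 1 - β = γL := by rw [hγL]; ring
  have hmIcc : m ∈ Set.Icc m L := ⟨le_refl m, hmL⟩
  have hLIcc : L ∈ Set.Icc m L := ⟨hmL, le_refl L⟩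
  set S : Set ℝ := {x : ℝ | ∃ lam ∈ Set.Icc m L, ∃ z : ℂ,
      z ^ 2 + ((α * lam - 1 - β : ℝ) : ℂ) * z + (β : ℂ) = 0 ∧
      x = ‖z‖} with hSdef
  have hγc : ∀ lam ∈ Set.Icc m L, γm ≤ α * lam - 1 - β ∧ α * lam - 1 - β ≤ γL := by
    rintro lam ⟨h1, h2⟩
    rw [hγm, hγL]
    constructor <;>
      nlinarith [mul_nonneg hα0.le (sub_nonneg.2 h1), mul_nonneg hα0.le (sub_nonneg.2 h2)]
  have main : ∀ M : ℝ, Real.sqrt β ≤ M →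
      (∀ c : ℝ, γm ≤ c → c ≤ γL → 4 * β ≤ c ^ 2 →
        (|c| + Real.sqrt (c ^ 2 - 4 * β)) / 2 ≤ M) →
      M ∈ S → R = M := by
    intro M h1 h2 h3
    rw [hR]
    refine IsGreatest.csSup_eq ⟨h3, ?_⟩
    rintro x ⟨lam, hlam, z, hz, rfl⟩
    rcases quad_root_cases β (α * lam - 1 - β) z hz with h | ⟨hd, hb⟩
    · rw [h]; exact h1
    · exact hb.trans (h2 _ (hγc lam hlam).1 (hγc lam hlam).2 hd)
  have memβm : γm ^ 2 ≤ 4 * β → Real.sqrt β ∈ S := by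
    intro h
    obtain ⟨z, hz, ha⟩ := quad_root_exists_complex β (α * m - 1 - β) (by rw [hmm]; exact h)
    exact ⟨m, hmIcc, z, hz, ha.symm⟩
  have memβL : γL ^ 2 ≤ 4 * β → Real.sqrt β ∈ S := by
    intro h
    obtain ⟨z, hz, ha⟩ := quad_root_exists_complex β (α * L - 1 - β) (by rw [hLL]; exact h)
    exact ⟨L, hLIcc, z, hz, ha.symm⟩
  have memrm : 4 * β ≤ γm ^ 2 → (|γm| + Real.sqrt (γm ^ 2 - 4 * β)) / 2 ∈ S := by
    intro h
    obtain ⟨z, hz, ha⟩ := quad_root_exists_real β (α * m - 1 - β) (by rw [hmm]; exact h)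
    rw [hmm] at ha
    exact ⟨m, hmIcc, z, hz, ha.symm⟩
  have memrL : 4 * β ≤ γL ^ 2 → (|γL| + Real.sqrt (γL ^ 2 - 4 * β)) / 2 ∈ S := by
    intro h
    obtain ⟨z, hz, ha⟩ := quad_root_exists_real β (α * L - 1 - β) (by rw [hLL]; exact h)
    rw [hLL] at ha
    exact ⟨L, hLIcc, z, hz, ha.symm⟩
  refine ⟨?_, ?_, ?_, ?_⟩
  · -- case 1
    intro hL1 hm1
    refine main _ (le_refl _) ?_ (memβm hm1.le)
    intro c hc1 hc2 hc4
    exfalso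
    rcases le_or_gt 0 c with h | h
    · nlinarith [mul_nonneg h (sub_nonneg.2 hc2), mul_nonneg (h.trans hc2) (sub_nonneg.2 hc2)]
    · nlinarith [mul_nonneg (neg_nonneg.2 h.le) (sub_nonneg.2 hc1),
        mul_nonneg (show (0:ℝ) ≤ -γm by linarith) (sub_nonneg.2 hc1)]
  · -- case 2
    intro hL4 hm1
    have hβpos : 0 < β := by nlinarith [sq_nonneg γm]
    have hsβpos : 0 < Real.sqrt β := Real.sqrt_pos.2 hβpos
    have hγmgt : -(2 * Real.sqrt β) < γm := by
      nlinarith [sq_nonneg (γm + 2 * Real.sqrt β)]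
    have hγL2 : 2 * Real.sqrt β ≤ γL := by
      by_contra hcon
      push_neg at hcon
      nlinarith [mul_pos (show (0:ℝ) < 2 * Real.sqrt β - γL by linarith)
        (show (0:ℝ) < 2 * Real.sqrt β + γL by linarith)]
    have hγL0 : 0 ≤ γL := by linarith
    refine main _ (le_max_left _ _) ?_ ?_
    · intro c hc1 hc2 hc4
      have hc0 : 0 ≤ c := by
        by_contra hneg
        push_neg at hneg
        nlinarith [mul_nonneg (neg_nonneg.2 hneg.le) (sub_nonneg.2 hc1),
          mul_nonneg (show (0:ℝ) ≤ -γm by linarith) (sub_nonneg.2 hc1)]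
      have hcle : c ^ 2 - 4 * β ≤ γL ^ 2 - 4 * β := by
        nlinarith [mul_nonneg hc0 (sub_nonneg.2 hc2), mul_nonneg hγL0 (sub_nonneg.2 hc2)]
      have hsle := Real.sqrt_le_sqrt hcle
      rw [_root_.abs_of_nonneg hc0]
      refine le_trans ?_ (le_max_right _ _)
      linarith
    · rcases le_total ((γL + Real.sqrt (γL ^ 2 - 4 * β)) / 2) (Real.sqrt β) with h | h
      · rw [max_eq_left h]; exact memβm hm1.le
      · rw [max_eq_right h]
        have h' := memrL hL4
        rwa [_root_.abs_of_nonneg hγL0] at h'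
  · -- case 3
    intro hL1 hm4
    have hβpos : 0 < β := by nlinarith [sq_nonneg γL]
    have hsβpos : 0 < Real.sqrt β := Real.sqrt_pos.2 hβpos
    have hγLlt : γL < 2 * Real.sqrt β := by
      nlinarith [sq_nonneg (γL - 2 * Real.sqrt β)]
    have hγm2 : γm ≤ -(2 * Real.sqrt β) := by
      by_contra hcon
      push_neg at hcon
      nlinarith [mul_pos (show (0:ℝ) < γm + 2 * Real.sqrt β by linarith)
        (show (0:ℝ) < 2 * Real.sqrt β - γm by linarith)]
    have hγm0 : γm ≤ 0 := by linarith
    refine main _ (le_max_left _ _) ?_ ?_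
    · intro c hc1 hc2 hc4
      have hc0 : c ≤ 0 := by
        by_contra hneg
        push_neg at hneg
        nlinarith [mul_nonneg hneg.le (sub_nonneg.2 hc2),
          mul_nonneg (show (0:ℝ) ≤ γL by linarith) (sub_nonneg.2 hc2)]
      have hcle : c ^ 2 - 4 * β ≤ γm ^ 2 - 4 * β := by
        nlinarith [mul_nonneg (neg_nonneg.2 hc0) (sub_nonneg.2 hc1),
          mul_nonneg (neg_nonneg.2 hγm0) (sub_nonneg.2 hc1)]
      have hsle := Real.sqrt_le_sqrt hcle
      rw [_root_.abs_of_nonpos hc0]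
      refine le_trans ?_ (le_max_right _ _)
      linarith
    · rcases le_total ((-γm + Real.sqrt (γm ^ 2 - 4 * β)) / 2) (Real.sqrt β) with h | h
      · rw [max_eq_left h]; exact memβL hL1.le
      · rw [max_eq_right h]
        have h' := memrm hm4
        rwa [_root_.abs_of_nonpos hγm0] at h'
  · -- case 4
    intro hL4 hm4
    have hsL := Real.sqrt_nonneg (γL ^ 2 - 4 * β)
    have hsm := Real.sqrt_nonneg (γm ^ 2 - 4 * β)
    refine main _ (le_max_left _ _) ?_ ?_
    · intro c hc1 hc2 hc4
      rcases le_or_gt 0 c with hc0 | hc0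
      · have hγL0 : 0 ≤ γL := hc0.trans hc2
        have hcle : c ^ 2 - 4 * β ≤ γL ^ 2 - 4 * β := by
          nlinarith [mul_nonneg hc0 (sub_nonneg.2 hc2), mul_nonneg hγL0 (sub_nonneg.2 hc2)]
        have hsle := Real.sqrt_le_sqrt hcle
        rw [_root_.abs_of_nonneg hc0]
        refine le_trans ?_ ((le_max_left _ _).trans (le_max_right _ _))
        linarith
      · have hγm0 : γm ≤ 0 := by linarith
        have hcle : c ^ 2 - 4 * β ≤ γm ^ 2 - 4 * β := by
          nlinarith [mul_nonneg (neg_nonneg.2 hc0.le) (sub_nonneg.2 hc1),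
            mul_nonneg (neg_nonneg.2 hγm0) (sub_nonneg.2 hc1)]
        have hsle := Real.sqrt_le_sqrt hcle
        rw [_root_.abs_of_nonpos hc0.le]
        refine le_trans ?_ ((le_max_right _ _).trans (le_max_right _ _))
        linarith
    · rcases le_or_gt 0 γL with hc | hc
      · have hγL2 : 2 * Real.sqrt β ≤ γL := by
          by_contra hcon
          push_neg at hcon
          nlinarith [mul_pos (show (0:ℝ) < 2 * Real.sqrt β - γL by linarith)
            (show (0:ℝ) < 2 * Real.sqrt β + γL by linarith)]
        have hhL : Real.sqrt β ≤ (γL + Real.sqrt (γL ^ 2 - 4 * β)) / 2 := by linarith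
        rcases le_total ((-γm + Real.sqrt (γm ^ 2 - 4 * β)) / 2)
            ((γL + Real.sqrt (γL ^ 2 - 4 * β)) / 2) with h | h
        · rw [max_eq_left h, max_eq_right hhL]
          have h' := memrL hL4
          rwa [_root_.abs_of_nonneg hc] at h'
        · have hγm0 : γm ≤ 0 := by
            by_contra hpos
            push_neg at hpos
            have h1 : Real.sqrt (γm ^ 2 - 4 * β) ≤ γm := by
              have h2 := Real.sqrt_le_sqrt (show γm ^ 2 - 4 * β ≤ γm ^ 2 by linarith)
              rwa [Real.sqrt_sq hpos.le] at h2
            have hγLle : γL ≤ 0 := by linarith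
            linarith
          rw [max_eq_right h, max_eq_right (hhL.trans h)]
          have h' := memrm hm4
          rwa [_root_.abs_of_nonpos hγm0] at h'
      · have hγm0 : γm ≤ 0 := by linarith
        have hγm2 : γm ≤ -(2 * Real.sqrt β) := by
          by_contra hcon
          push_neg at hcon
          nlinarith [mul_pos (show (0:ℝ) < γm + 2 * Real.sqrt β by linarith)
            (show (0:ℝ) < 2 * Real.sqrt β - γm by linarith)]
        have hLle : Real.sqrt (γL ^ 2 - 4 * β) ≤ -γL := by
          have h2 := Real.sqrt_le_sqrt (show γL ^ 2 - 4 * β ≤ γL ^ 2 by linarith)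
          rwa [show Real.sqrt (γL ^ 2) = -γL from by
            rw [Real.sqrt_sq_eq_abs]; exact _root_.abs_of_neg hc] at h2
        have hhm : Real.sqrt β ≤ (-γm + Real.sqrt (γm ^ 2 - 4 * β)) / 2 := by linarith
        have hLm : (γL + Real.sqrt (γL ^ 2 - 4 * β)) / 2 ≤
            (-γm + Real.sqrt (γm ^ 2 - 4 * β)) / 2 := by linarith
        rw [max_eq_right hLm, max_eq_right hhm]
        have h' := memrm hm4
        rwa [_root_.abs_of_nonpos hγm0] at h'
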